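/- Let H be an hereditary abelian category, viewed inside its bounded derived category D^b(H). For a morphism f : X → Y in H with kernel K (via x ∘ k where x : K → X is the kernel map) and cokernel C (via y : Y → C), factored through its image I as f = f₂ ∘ f₁, there is an exact triangle in D^b(H) of the form X --f--> Y --⟨-ε, y⟩--> K[1] ⊕ C --(x[1], η)--> X[1], where ε ∈ Hom(Y, K[1]) and η ∈ Hom(C, X[1]) are the classes of certain extensions fitting in a pull-back/push-out diagram. In particular, the cone of f in D^b(H) is isomorphic to (ker f)[1] ⊕ coker f. -/

import Mathlib

/-!
STATEMENT 7: Let `H` be a hereditary abelian category (here: all morphisms from `X` to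
`Y⟦n⟧` between objects of the heart of the derived category vanish for `n ≥ 2`), viewed
inside its (bounded) derived category via the functor `singleFunctor H 0`.  For a morphism
`f : X ⟶ Y` in `H` with kernel `K`, cokernel `Q`, there exist classes
`ε : Y ⟶ K⟦1⟧` and `η : Q ⟶ X⟦1⟧` such that
`X --f--> Y --⟨-ε, π⟩--> K⟦1⟧ ⊞ Q --(ι⟦1⟧, η)--> X⟦1⟧` is an exact triangle; in particular
the cone of `f` is isomorphic to `(ker f)⟦1⟧ ⊞ coker f`.
-/

open CategoryTheory Category Limits Pretriangulated

noncomputable abbrev DerivedCategory.ι (A : Type*) [Category A] [Abelian A]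
    [HasDerivedCategory A] : A ⥤ DerivedCategory A :=
  DerivedCategory.singleFunctor A 0

section aux
variable {A : Type*} [Category A] [Abelian A] {X Y : A} (f : X ⟶ Y)

lemma aux_w1 : kernel.ι f ≫ factorThruImage f = 0 := by
  rw [← cancel_mono (image.ι f), assoc, image.fac, zero_comp, kernel.condition]

lemma aux_SES1 : (ShortComplex.mk (kernel.ι f) (factorThruImage f) (aux_w1 f)).ShortExact := by
  refine ShortComplex.ShortExact.mk' ?_ inferInstance inferInstance
  apply ShortComplex.exact_of_f_is_kernel
  refine KernelFork.IsLimit.ofι _ _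
    (fun {W} g hg => kernel.lift f g ?_) (fun {W} g hg => by simp) ?_
  · rw [← image.fac f, ← assoc, hg, zero_comp]
  · intro W g hg m hm
    rw [← cancel_mono (kernel.ι f), hm]
    simp

lemma aux_w2 : image.ι f ≫ cokernel.π f = 0 := by
  rw [← cancel_epi (factorThruImage f), ← assoc, image.fac, comp_zero, cokernel.condition]

lemma aux_SES2 : (ShortComplex.mk (image.ι f) (cokernel.π f) (aux_w2 f)).ShortExact := by
  refine ShortComplex.ShortExact.mk' ?_ inferInstance inferInstance
  apply ShortComplex.exact_of_g_is_cokernel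
  refine CokernelCofork.IsColimit.ofπ _ _
    (fun {W} g hg => cokernel.desc f g ?_) (fun {W} g hg => by simp) ?_
  · rw [← image.fac f, assoc, hg, comp_zero]
  · intro W g hg m hm
    rw [← cancel_epi (cokernel.π f), hm]
    simp

end aux

theorem cone_in_hereditary_derived_category
    {A : Type*} [Category A] [Abelian A] [HasDerivedCategory A]
    (hHered : ∀ (X Y : A) (n : ℤ), 2 ≤ n →
      ∀ f : (DerivedCategory.ι A).obj X ⟶ ((DerivedCategory.ι A).obj Y)⟦n⟧, f = 0)
    {X Y : A} (f : X ⟶ Y) :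
    ∃ (ε : (DerivedCategory.ι A).obj Y ⟶ ((DerivedCategory.ι A).obj (kernel f))⟦(1 : ℤ)⟧)
      (η : (DerivedCategory.ι A).obj (cokernel f) ⟶ ((DerivedCategory.ι A).obj X)⟦(1 : ℤ)⟧),
      Triangle.mk ((DerivedCategory.ι A).map f)
        (biprod.lift (-ε) ((DerivedCategory.ι A).map (cokernel.π f)))
        (biprod.desc ((shiftFunctor (DerivedCategory A) (1 : ℤ)).map
            ((DerivedCategory.ι A).map (kernel.ι f))) η)
        ∈ distTriang (DerivedCategory A) := by
  set F := DerivedCategory.ι A with hF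
  have hT1 := (aux_SES1 f).singleTriangle_distinguished
  have hT2' := (aux_SES2 f).singleTriangle_distinguished
  set δ1 := (aux_SES1 f).singleδ with hδ1
  set δ2 := (aux_SES2 f).singleδ with hδ2
  have h12 : Triangle.mk (F.map (factorThruImage f)) δ1
      (-(F.map (kernel.ι f))⟦(1:ℤ)⟧') ∈ distTriang (DerivedCategory A) :=
    rot_of_distTriang _ hT1
  have h23 : Triangle.mk (F.map (image.ι f)) (F.map (cokernel.π f)) δ2
      ∈ distTriang (DerivedCategory A) := hT2'
  have comm : F.map (factorThruImage f) ≫ F.map (image.ι f) = F.map f := by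
    rw [← Functor.map_comp, image.fac]
  obtain ⟨Z, v, w, hT⟩ := distinguished_cocone_triangle (F.map f)
  have O := Triangulated.someOctahedron comm h12 h23 hT
  have hzero : δ2 ≫ δ1⟦(1:ℤ)⟧' = 0 := by
    set eiso := shiftFunctorAdd' (DerivedCategory A) (1:ℤ) (1:ℤ) (2:ℤ) (by norm_num)
    have h := hHered (cokernel f) (kernel f) 2 (le_refl 2)
      (δ2 ≫ δ1⟦(1:ℤ)⟧' ≫ eiso.inv.app (F.obj (kernel f)))
    have h2 : (δ2 ≫ δ1⟦(1:ℤ)⟧' ≫ eiso.inv.app (F.obj (kernel f))) ≫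
        eiso.hom.app (F.obj (kernel f)) = 0 := by rw [h, zero_comp]
    simp at h2; erw [comp_id] at h2; exact h2
  obtain ⟨b, hb1, hb2⟩ := complete_distinguished_triangle_morphism₂ _ _
    O.mem (binaryBiproductTriangle_distinguished
      ((F.obj (kernel f))⟦(1:ℤ)⟧) (F.obj (cokernel f))) (𝟙 _) (𝟙 _)
    (by dsimp; rw [hzero]; exact zero_comp.trans comp_zero.symm)
  dsimp at hb1 hb2
  erw [id_comp] at hb1
  erw [comp_id] at hb2
  revert b
  intro (b : Z ⟶ (F.obj (kernel f))⟦(1:ℤ)⟧ ⊞ F.obj (cokernel f))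
    (hb1 : O.m₁ ≫ b = biprod.inl) (hb2 : O.m₃ = b ≫ biprod.snd)
  have : IsIso b := by
    have := isIso₂_of_isIso₁₃
      ({ hom₁ := 𝟙 _, hom₂ := b, hom₃ := 𝟙 _,
         comm₁ := hb1.trans (id_comp _).symm, comm₂ := (comp_id _).trans hb2,
         comm₃ := by dsimp; rw [hzero]; exact zero_comp.trans comp_zero.symm } :
        Triangle.mk O.m₁ O.m₃ (δ2 ≫ δ1⟦(1:ℤ)⟧') ⟶ binaryBiproductTriangle _ _)
      O.mem (binaryBiproductTriangle_distinguished _ _) (IsIso.id _) (IsIso.id _)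
    exact this
  set d : ((F.obj (kernel f))⟦(1:ℤ)⟧ ⊞ F.obj (cokernel f)) ⟶
      ((F.obj (kernel f))⟦(1:ℤ)⟧ ⊞ F.obj (cokernel f)) :=
    biprod.map (-𝟙 _) (𝟙 _) with hd'
  have hd : d ≫ d = 𝟙 _ := by
    ext <;> simp [hd']
  set e : Z ≅ ((F.obj (kernel f))⟦(1:ℤ)⟧ ⊞ F.obj (cokernel f)) :=
    asIso b ≪≫ ⟨d, d, hd, hd⟩ with he
  have hesnd : e.hom ≫ biprod.snd = O.m₃ := by
    rw [he]
    dsimp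
    rw [assoc, hd']
    simp [hb2]
  have heinl : biprod.inl ≫ e.inv = -O.m₁ := by
    rw [he]
    dsimp
    rw [hd', ← assoc]
    simp only [biprod.inl_map]
    have : biprod.inl ≫ inv b = O.m₁ := by
      rw [← hb1]; simp
    simp [this]
  refine ⟨-(v ≫ e.hom ≫ biprod.fst), biprod.inr ≫ e.inv ≫ w, ?_⟩
  refine isomorphic_distinguished _ hT _ ?_
  have hmor2 : biprod.lift (-(-(v ≫ e.hom ≫ biprod.fst))) (F.map (cokernel.π f))
      = v ≫ e.hom := by
    ext
    · simp
    · rw [biprod.lift_snd, assoc, hesnd, O.comm₃]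
  have hmor3 : biprod.desc ((shiftFunctor (DerivedCategory A) (1 : ℤ)).map
      (F.map (kernel.ι f))) (biprod.inr ≫ e.inv ≫ w) = e.inv ≫ w := by
    ext
    · rw [biprod.inl_desc, ← assoc, heinl, Preadditive.neg_comp, O.comm₂]
      simp
    · simp
  exact Triangle.isoMk _ _ (Iso.refl _) (Iso.refl _) e.symm
    ((comp_id _).trans (id_comp _).symm) (by dsimp; rw [hmor2]; exact (by simp : (v ≫ e.hom) ≫ e.inv = v).trans (id_comp _).symm)
    (by dsimp; rw [hmor3]; exact (whisker_eq _ (CategoryTheory.Functor.map_id _ _)).trans (comp_id _))
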